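/- Let d ≥ 2, m > 0, and let p be a polynomial in d variables X_0, X_1, …, X_{d−1} with complex coefficients. Suppose the function q(k) = p(i·k_0, k_1, …, k_{d−1}) vanishes at every real point (k_0, …, k_{d−1}) with k_0^2 − (k_1^2 + ⋯ + k_{d−1}^2) = m^2. Then the polynomial X_0^2 + X_1^2 + ⋯ + X_{d−1}^2 + m^2 divides p in ℂ[X_0, …, X_{d−1}]. -/

import Mathlib

open MvPolynomial

lemma real_vanish : ∀ (n : ℕ) (P : MvPolynomial (Fin n) ℂ),
    (∀ k : Fin n → ℝ, MvPolynomial.eval (fun i => (k i : ℂ)) P = 0) → P = 0 := by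
  intro n
  induction n with
  | zero =>
    intro P h
    obtain ⟨c, rfl⟩ := MvPolynomial.C_surjective (Fin 0) P
    simpa using h (fun _ => 0)
  | succ n ih =>
    intro P h
    have hφ : finSuccEquiv ℂ n P = 0 := by
      apply Polynomial.ext
      intro j
      rw [Polynomial.coeff_zero]
      apply ih
      intro k
      have hg : (Polynomial.map (MvPolynomial.eval (fun i => (k i : ℂ)))
          (finSuccEquiv ℂ n P)) = 0 := by
        apply Polynomial.eq_zero_of_infinite_isRoot
        apply Set.Infinite.mono (s := Set.range (fun r : ℝ => (r : ℂ)))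
        · rintro x ⟨r, rfl⟩
          show Polynomial.eval (r : ℂ)
            (Polynomial.map (MvPolynomial.eval (fun i => (k i : ℂ))) (finSuccEquiv ℂ n P)) = 0
          rw [← eval_eq_eval_mv_eval' (fun i => (k i : ℂ)) (r : ℂ) P]
          have := h (Fin.cons r k)
          rw [show (fun i => ((Fin.cons r k : Fin (n+1) → ℝ) i : ℂ))
              = Fin.cons (r : ℂ) (fun i => (k i : ℂ)) from ?_] at this
          · exact this
          · funext i
            refine Fin.cases ?_ ?_ i <;> simp
        · exact Set.infinite_range_of_injective (fun a b hab => by exact_mod_cast hab)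
      have := congrArg (fun q => Polynomial.coeff q j) hg
      simpa [Polynomial.coeff_map] using this
    have := congrArg (finSuccEquiv ℂ n).symm hφ
    simpa using this

/-- If the Minkowski continuation `q(k) = p(i k₀, k₁, …, k_{d-1})` of a complex
polynomial `p` vanishes at every real point of the mass shell
`k₀² - (k₁² + ⋯ + k_{d-1}²) = m²`, then the Euclidean quadric
`X₀² + X₁² + ⋯ + X_{d-1}² + m²` divides `p` in `ℂ[X₀, …, X_{d-1}]`. -/
theorem euclidean_quadric_dvd_of_minkowski_vanishing
    (d : ℕ) (hd : 2 ≤ d) (m : ℝ) (hm : 0 < m) (p : MvPolynomial (Fin d) ℂ)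
    (hp : ∀ k : Fin d → ℝ,
      (k ⟨0, by omega⟩) ^ 2 - ∑ i ∈ Finset.univ.erase ⟨0, by omega⟩, (k i) ^ 2 = m ^ 2 →
      MvPolynomial.eval
        (fun i => if i = (⟨0, by omega⟩ : Fin d) then Complex.I * (k i : ℂ)
          else (k i : ℂ)) p = 0) :
    ((∑ i : Fin d, X i ^ 2 + C ((m : ℂ) ^ 2) : MvPolynomial (Fin d) ℂ)) ∣ p := by
  obtain ⟨n, rfl⟩ : ∃ n, d = n + 1 := ⟨d - 1, by omega⟩
  set q : MvPolynomial (Fin (n+1)) ℂ := ∑ i : Fin (n+1), X i ^ 2 + C ((m : ℂ) ^ 2) with hq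
  set c : MvPolynomial (Fin n) ℂ := ∑ i : Fin n, X i ^ 2 + C ((m : ℂ) ^ 2) with hc
  have hQ : finSuccEquiv ℂ n q = Polynomial.X ^ 2 + Polynomial.C c := by
    rw [hq, hc]
    simp [map_sum, Fin.sum_univ_succ, finSuccEquiv_X_zero, finSuccEquiv_X_succ,
      finSuccEquiv_apply, add_assoc]
  have hmon : (Polynomial.X ^ 2 + Polynomial.C c :
      Polynomial (MvPolynomial (Fin n) ℂ)).Monic := Polynomial.monic_X_pow_add_C c two_ne_zero
  have hdegQ : (Polynomial.X ^ 2 + Polynomial.C c :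
      Polynomial (MvPolynomial (Fin n) ℂ)).degree = 2 :=
    Polynomial.degree_X_pow_add_C (by norm_num) c
  set r := (finSuccEquiv ℂ n p) %ₘ (Polynomial.X ^ 2 + Polynomial.C c) with hrdef
  have hdeg : r.degree < 2 := hdegQ ▸ Polynomial.degree_modByMonic_lt _ hmon
  have hdeg1 : r.degree ≤ 1 := by
    rw [Polynomial.degree_le_iff_coeff_zero]
    intro i hi
    apply Polynomial.coeff_eq_zero_of_degree_lt
    refine hdeg.trans_le ?_
    have h2i : 2 ≤ i := by exact_mod_cast hi
    exact_mod_cast h2i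
  have hre : r = Polynomial.C (r.coeff 1) * Polynomial.X + Polynomial.C (r.coeff 0) :=
    Polynomial.eq_X_add_C_of_degree_le_one hdeg1
  -- the key evaluation argument
  have key : ∀ k : Fin n → ℝ,
      MvPolynomial.eval (fun i => (k i : ℂ)) (r.coeff 0) = 0 ∧
      MvPolynomial.eval (fun i => (k i : ℂ)) (r.coeff 1) = 0 := by
    intro k
    set E : MvPolynomial (Fin n) ℂ →+* ℂ := MvPolynomial.eval (fun i => (k i : ℂ)) with hE
    set S : ℝ := m ^ 2 + ∑ i, k i ^ 2 with hSdef
    have hS : 0 < S := by positivity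
    set s := Real.sqrt S with hsdef
    have hs2 : s ^ 2 = S := Real.sq_sqrt hS.le
    have hs : 0 < s := Real.sqrt_pos.mpr hS
    have hEc : E c = (S : ℂ) := by
      simp only [hc, hE, map_add, map_sum, map_pow, eval_X, eval_C, hSdef]
      push_cast
      ring
    have root : ∀ ε : ℝ, ε ^ 2 = 1 →
        E (r.coeff 0) + E (r.coeff 1) * (Complex.I * ((ε * s : ℝ) : ℂ)) = 0 := by
      intro ε hε
      set kk : Fin (n+1) → ℝ := Fin.cons (ε * s) k with hkk
      have shell : (kk ⟨0, by omega⟩) ^ 2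
          - ∑ i ∈ Finset.univ.erase ⟨0, by omega⟩, (kk i) ^ 2 = m ^ 2 := by
        have h1 : ∑ i ∈ Finset.univ.erase (0 : Fin (n+1)), (kk i) ^ 2 + (kk 0) ^ 2
            = ∑ i : Fin (n+1), (kk i) ^ 2 :=
          Finset.sum_erase_add _ _ (Finset.mem_univ 0)
        have h2 : ∑ i : Fin (n+1), (kk i) ^ 2 = (kk 0) ^ 2 + ∑ j : Fin n, (kk j.succ) ^ 2 :=
          Fin.sum_univ_succ _
        have h3 : ∀ j : Fin n, kk j.succ = k j := fun j => Fin.cons_succ _ _ _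
        have h4 : kk 0 = ε * s := Fin.cons_zero _ _
        have h5 : (⟨0, by omega⟩ : Fin (n+1)) = 0 := rfl
        rw [h5]
        simp only [h3] at h1 h2
        have : ∑ i ∈ Finset.univ.erase (0 : Fin (n+1)), (kk i) ^ 2 = ∑ j : Fin n, (k j) ^ 2 := by
          linarith
        rw [this, h4, mul_pow, hε, hs2, one_mul, hSdef]
        ring
      have h0 := hp kk shell
      have hv : (fun i => if i = (⟨0, by omega⟩ : Fin (n+1)) then Complex.I * (kk i : ℂ)
            else (kk i : ℂ))
          = Fin.cons (Complex.I * ((ε * s : ℝ) : ℂ)) (fun i => (k i : ℂ)) := by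
        funext i
        refine Fin.cases ?_ ?_ i
        · simp [hkk]
        · intro j
          simp [hkk, Fin.succ_ne_zero]
      rw [hv, eval_eq_eval_mv_eval'] at h0
      -- now h0 : Polynomial.eval y (map E (finSuccEquiv ℂ n p)) = 0 with y = I * (ε s)
      set y : ℂ := Complex.I * ((ε * s : ℝ) : ℂ) with hy
      have hy2 : y ^ 2 + (S : ℂ) = 0 := by
        rw [hy]
        push_cast
        rw [mul_pow, Complex.I_sq]
        have : ((ε : ℂ) * s) ^ 2 = ((ε ^ 2 * s ^ 2 : ℝ) : ℂ) := by push_cast; ring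
        rw [this, hε, one_mul, hs2]
        ring
      have hsplit := Polynomial.modByMonic_add_div (finSuccEquiv ℂ n p)
        (Polynomial.X ^ 2 + Polynomial.C c)
      have := congrArg (fun t => Polynomial.eval y (Polynomial.map E t)) hsplit
      simp only [Polynomial.map_add, Polynomial.map_mul, Polynomial.eval_add,
        Polynomial.eval_mul, Polynomial.map_pow, Polynomial.map_X, Polynomial.map_C,
        Polynomial.eval_pow, Polynomial.eval_X, Polynomial.eval_C] at this
      rw [h0] at this
      have hQ0 : y ^ 2 + E c = 0 := by rw [hEc]; exact hy2
      rw [hQ0, zero_mul, add_zero] at this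
      -- this : eval y (map E r) = 0
      have hrmap := congrArg (fun t => Polynomial.eval y (Polynomial.map E t)) hre
      simp only [Polynomial.map_add, Polynomial.map_mul, Polynomial.map_C, Polynomial.map_X,
        Polynomial.eval_add, Polynomial.eval_mul, Polynomial.eval_C, Polynomial.eval_X] at hrmap
      rw [← hrdef] at this
      rw [this] at hrmap
      linear_combination -hrmap
    have r1 := root 1 (by norm_num)
    have r2 := root (-1) (by norm_num)
    have hb : E (r.coeff 0) = 0 := by
      have : (2 : ℂ) * E (r.coeff 0) = 0 := by
        push_cast at r1 r2 ⊢
        linear_combination r1 + r2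
      simpa using this
    refine ⟨hb, ?_⟩
    have ha' : E (r.coeff 1) * (Complex.I * (s : ℂ)) = 0 := by
      rw [hb, zero_add] at r1
      push_cast at r1
      convert r1 using 2
      push_cast
      ring
    have hsne : (s : ℂ) ≠ 0 := by exact_mod_cast hs.ne'
    rcases mul_eq_zero.mp ha' with h | h
    · exact h
    · exact absurd h (mul_ne_zero Complex.I_ne_zero hsne)
  have ha : r.coeff 1 = 0 := real_vanish n _ (fun k => (key k).2)
  have hb : r.coeff 0 = 0 := real_vanish n _ (fun k => (key k).1)
  have hr0 : r = 0 := by rw [hre, ha, hb]; simp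
  have hdvd : (Polynomial.X ^ 2 + Polynomial.C c :
      Polynomial (MvPolynomial (Fin n) ℂ)) ∣ finSuccEquiv ℂ n p :=
    (Polynomial.modByMonic_eq_zero_iff_dvd hmon).mp hr0
  rw [← hQ] at hdvd
  obtain ⟨h, hh⟩ := hdvd
  exact ⟨(finSuccEquiv ℂ n).symm h, by
    apply (finSuccEquiv ℂ n).injective
    rw [map_mul, hh]
    simp⟩
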